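/- For any normed BPA system G = (V, Act, R), every A ∈ V and every γ ∈ V*: the set of strings α ∈ V* such that αγ ~ Aγ in L_G and α is a redundancy-free prefix of αγ is nonempty and finite, and every α in this set satisfies |α| ≤ ‖A‖. -/

import Mathlib

/-! Common definitions: labelled transition systems, branching bisimulation,
branching bisimilarity, silent states, class-change norm, BPA systems,
right-to-left finite transducers. -/

/-- A τ-path `t = t₀ →τ t₁ →τ ⋯ →τ t_k` in which every state after `t₀`
is related to `s` by `B`. -/
inductive TauSeq {S Act : Type} (tr : S → Act → S → Prop) (τ : Act)
    (B : S → S → Prop) (s : S) : S → S → Prop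
  | refl (t : S) : TauSeq tr τ B s t t
  | step {t t' t'' : S} : tr t τ t' → B s t' → TauSeq tr τ B s t' t'' →
      TauSeq tr τ B s t t''

/-- `B` is a branching bisimulation in the LTS given by `tr` with silent action `τ`. -/
def IsBranchingBisim {S Act : Type} (tr : S → Act → S → Prop) (τ : Act)
    (B : S → S → Prop) : Prop :=
  ∀ s t, B s t →
    (∀ a s', tr s a s' →
      ((a = τ ∧ B s' t) ∨
        ∃ tk t', TauSeq tr τ B s t tk ∧ tr tk a t' ∧ B s' t')) ∧
    (∀ a t', tr t a t' →
      ((a = τ ∧ B s t') ∨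
        ∃ sk s', TauSeq tr τ (fun u v => B v u) t s sk ∧ tr sk a s' ∧ B s' t'))

/-- Branching bisimilarity: `s ~ t` iff some branching bisimulation contains `(s,t)`. -/
def BBisim {S Act : Type} (tr : S → Act → S → Prop) (τ : Act) (s t : S) : Prop :=
  ∃ B, IsBranchingBisim tr τ B ∧ B s t

/-- `Steps tr s w t`: there is a path from `s` to `t` labelled by the word `w`. -/
inductive Steps {S Act : Type} (tr : S → Act → S → Prop) : S → List Act → S → Prop
  | refl (s : S) : Steps tr s [] s
  | step {s : S} {a : Act} {s' : S} {w : List Act} {t : S} :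
      tr s a s' → Steps tr s' w t → Steps tr s (a :: w) t

/-- A state is silent if only τ-labelled words can be performed from it. -/
def SilentState {S Act : Type} (tr : S → Act → S → Prop) (τ : Act) (s : S) : Prop :=
  ∀ w s', Steps tr s w s' → ∀ a ∈ w, a = τ

/-- A τ-path in which no transition is class-changing (each step stays in the same
`~`-class). -/
inductive TauNC {S Act : Type} (tr : S → Act → S → Prop) (τ : Act) : S → S → Prop
  | refl (t : S) : TauNC tr τ t t
  | step {t t' t'' : S} : tr t τ t' → BBisim tr τ t t' → TauNC tr τ t' t'' →
      TauNC tr τ t t''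

/-- `CCPath tr τ s n t`: there is a path from `s` to `t` containing exactly `n`
class-changing transitions. -/
inductive CCPath {S Act : Type} (tr : S → Act → S → Prop) (τ : Act) : S → ℕ → S → Prop
  | refl (s : S) : CCPath tr τ s 0 s
  | stepEq {s : S} {a : Act} {s' : S} {n : ℕ} {t : S} :
      tr s a s' → BBisim tr τ s s' → CCPath tr τ s' n t → CCPath tr τ s n t
  | stepNe {s : S} {a : Act} {s' : S} {n : ℕ} {t : S} :
      tr s a s' → ¬ BBisim tr τ s s' → CCPath tr τ s' n t → CCPath tr τ s (n + 1) t

/-- The class-change norm: the least number of class-changing transitions on a path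
to a silent state; `⊤` (ω) if no silent state is reachable. -/
noncomputable def ccNorm {S Act : Type} (tr : S → Act → S → Prop) (τ : Act) (s : S) : ℕ∞ :=
  sInf {n : ℕ∞ | ∃ ℓ : ℕ, n = (ℓ : ℕ∞) ∧ ∃ t, CCPath tr τ s ℓ t ∧ SilentState tr τ t}

/-- A BPA system: a finite set of rules `A →a α` (a context-free grammar in
Greibach normal form, no starting variable). -/
structure BPA (V Act : Type) where
  rules : Finset (V × Act × List V)

/-- The transition relation of the LTS `L_G` associated with a BPA system `G`:
`Aβ →a γβ` whenever `A →a γ` is a rule. -/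
def BPA.tr {V Act : Type} (G : BPA V Act) : List V → Act → List V → Prop :=
  fun s a t => ∃ (A : V) (γ β : List V), (A, a, γ) ∈ G.rules ∧ s = A :: β ∧ t = γ ++ β

/-- The (standard, syntactic) norm of a process: the length of a shortest word
leading to the empty process; `⊤` (ω) if there is none. -/
noncomputable def BPA.norm {V Act : Type} (G : BPA V Act) (α : List V) : ℕ∞ :=
  sInf {n : ℕ∞ | ∃ w : List Act, n = (w.length : ℕ∞) ∧ Steps G.tr α w []}

/-- A BPA system is normed if every variable has a finite norm. -/
def BPA.Normed {V Act : Type} (G : BPA V Act) : Prop :=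
  ∀ A : V, G.norm [A] ≠ ⊤

/-- The transition relation of `L_{G,R}`: as `L_G`, but all outgoing transitions of
states in `R*` are removed. -/
def BPA.trR {V Act : Type} (G : BPA V Act) (R : Set V) : List V → Act → List V → Prop :=
  fun s a t => G.tr s a t ∧ ¬ (∀ X ∈ s, X ∈ R)

/-- `R_γ`: the set of variables redundant w.r.t. `γ`, i.e. those `X` with `Xγ ~ γ`. -/
def RedSet {V Act : Type} (G : BPA V Act) (τ : Act) (γ : List V) : Set V :=
  {X : V | BBisim G.tr τ (X :: γ) γ}

/-- `α` is a redundancy-free prefix of `αγ`: it cannot be written as `δXβ` with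
`Xβγ ~ βγ`. -/
def RedFreePrefix {V Act : Type} (G : BPA V Act) (τ : Act) (α γ : List V) : Prop :=
  ¬ ∃ (δ : List V) (X : V) (β : List V),
      α = δ ++ X :: β ∧ BBisim G.tr τ (X :: (β ++ γ)) (β ++ γ)

/-- A finite-state transducer reading (and writing) from right to left. -/
structure Transducer (Q V : Type) where
  delta : Q → V → Q × List V
  q0 : Q

/-- Running the transducer on an input string, right to left:
`T.run α q = (q', β)` means `q' ⇐α|β= q`. -/
def Transducer.run {Q V : Type} (T : Transducer Q V) : List V → Q → Q × List V
  | [], q => (q, [])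
  | A :: α, q =>
      let p := T.run α q
      ((T.delta p.1 A).1, (T.delta p.1 A).2 ++ p.2)

/-- `T_q(α)`: the output of `T` on input `α`, started in state `q`. -/
def Transducer.out {Q V : Type} (T : Transducer Q V) (q : Q) (α : List V) : List V :=
  (T.run α q).2

/-- `q`-normal forms: `ε ∈ NF_q`, and `αA ∈ NF_q` iff `A` is a `q`-prime and
`α` is a `q'`-normal form where `q' ⇐A|A= q`. -/
inductive Transducer.NF {Q V : Type} (T : Transducer Q V) : Q → List V → Prop
  | nil (q : Q) : Transducer.NF T q []
  | snoc {q : Q} {A : V} {α : List V} :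
      (T.delta q A).2 = [A] → Transducer.NF T (T.delta q A).1 α →
      Transducer.NF T q (α ++ [A])

/-- A normal-form-computing (nfc) transducer: each `T_q(A)` is a `q`-normal form,
and `q' ⇐A|γ= q` implies `q' ⇐γ|γ= q`. -/
def Transducer.IsNFC {Q V : Type} (T : Transducer Q V) : Prop :=
  ∀ (q : Q) (A : V),
    Transducer.NF T q (T.delta q A).2 ∧ T.run (T.delta q A).2 q = T.delta q A

/-- A τ-path in `L_G` along which the `T_q`-output stays constant. -/
inductive ConstTauSeq {Q V Act : Type} (tr : List V → Act → List V → Prop) (τ : Act)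
    (T : Transducer Q V) (q : Q) : List V → List V → Prop
  | refl (α : List V) : ConstTauSeq tr τ T q α α
  | step {α α' α'' : List V} : tr α τ α' → T.out q α' = T.out q α →
      ConstTauSeq tr τ T q α' α'' → ConstTauSeq tr τ T q α α''

/-- The long move `α ⇒a_q β`. -/
def BigStep {Q V Act : Type} (G : BPA V Act) (τ : Act) (T : Transducer Q V) (q : Q)
    (α : List V) (a : Act) (β : List V) : Prop :=
  (a = τ ∧ β = T.out q α) ∨
  ∃ αk β', ConstTauSeq G.tr τ T q α αk ∧ G.tr αk a β' ∧ β = T.out q β'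

/-- The equivalence `α₁ ≈_q α₂`: the same long moves are available. -/
def TApprox {Q V Act : Type} (G : BPA V Act) (τ : Act) (T : Transducer Q V) (q : Q)
    (α₁ α₂ : List V) : Prop :=
  ∀ a β, BigStep G τ T q α₁ a β ↔ BigStep G τ T q α₂ a β

/-- Consistency of an nfc-transducer with a BPA system (Definition 4.1). -/
def ConsistentWith {Q V Act : Type} (T : Transducer Q V) (G : BPA V Act) (τ : Act) : Prop :=
  (∀ A : V, T.out T.q0 [A] = [] → TApprox G τ T T.q0 [A] []) ∧
  (∀ (q : Q) (A : V), T.out q [A] ≠ [] → TApprox G τ T q [A] (T.out q [A])) ∧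
  (∀ (q : Q) (A C : V), T.out q [A, C] = [C] → T.out q [C] = [C] →
    TApprox G τ T q [A, C] [C])

section Aux
variable {S Act : Type} {tr : S → Act → S → Prop} {τ : Act}

namespace Aux18

theorem TauSeq.mono {B B' : S → S → Prop} {s s₂ t u : S}
    (h : TauSeq tr τ B s t u) (f : ∀ x, B s x → B' s₂ x) : TauSeq tr τ B' s₂ t u := by
  induction h with
  | refl t => exact TauSeq.refl t
  | step htr hb _ ih => exact TauSeq.step htr (f _ hb) ih

theorem TauSeq.trans_seq {B : S → S → Prop} {s x y z : S}
    (h1 : TauSeq tr τ B s x y) (h2 : TauSeq tr τ B s y z) : TauSeq tr τ B s x z := by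
  induction h1 with
  | refl => exact h2
  | step htr hb _ ih => exact TauSeq.step htr hb (ih h2)

theorem TauSeq.last {B : S → S → Prop} {s x y : S}
    (h : TauSeq tr τ B s x y) (hx : B s x) : B s y := by
  induction h with
  | refl => exact hx
  | step _ hb _ ih => exact ih hb

theorem TauSeq.lastStep {B : S → S → Prop} {s x y : S}
    (h : TauSeq tr τ B s x y) :
    y = x ∨ ∃ ym, TauSeq tr τ B s x ym ∧ tr ym τ y ∧ B s y := by
  induction h with
  | refl => exact Or.inl rfl
  | @step x x₁ y htr hb _ ih =>
    rcases ih with rfl | ⟨ym, hseq, htr', hb'⟩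
    · exact Or.inr ⟨x, TauSeq.refl x, htr, hb⟩
    · exact Or.inr ⟨ym, TauSeq.step htr hb hseq, htr', hb'⟩

theorem bb_refl (s : S) : BBisim tr τ s s := by
  refine ⟨Eq, ?_, rfl⟩
  intro s t hst
  subst hst
  constructor
  · intro a s' h
    exact Or.inr ⟨s, s', TauSeq.refl s, h, rfl⟩
  · intro a t' h
    exact Or.inr ⟨s, t', TauSeq.refl s, h, rfl⟩

theorem isBB_flip {B : S → S → Prop} (h : IsBranchingBisim tr τ B) :
    IsBranchingBisim tr τ (fun u v => B v u) := by
  intro s t hst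
  obtain ⟨h1, h2⟩ := h t s hst
  constructor
  · intro a s' htr
    rcases h2 a s' htr with ⟨ha, hb⟩ | ⟨tk, t', hseq, htr', hb⟩
    · exact Or.inl ⟨ha, hb⟩
    · exact Or.inr ⟨tk, t', hseq, htr', hb⟩
  · intro a t' htr
    rcases h1 a t' htr with ⟨ha, hb⟩ | ⟨sk, s', hseq, htr', hb⟩
    · exact Or.inl ⟨ha, hb⟩
    · exact Or.inr ⟨sk, s', hseq, htr', hb⟩

theorem bb_symm {s t : S} (h : BBisim tr τ s t) : BBisim tr τ t s := by
  obtain ⟨B, hB, hst⟩ := h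
  exact ⟨fun u v => B v u, isBB_flip hB, hst⟩

/-- One-way (forward) branching simulation condition. -/
def OW (tr : S → Act → S → Prop) (τ : Act) (B : S → S → Prop) : Prop :=
  ∀ s t, B s t → ∀ a s', tr s a s' →
    ((a = τ ∧ B s' t) ∨
      ∃ tk t', TauSeq tr τ B s t tk ∧ tr tk a t' ∧ B s' t')

theorem isBB_of_OW {B : S → S → Prop} (h1 : OW tr τ B) (h2 : OW tr τ (fun u v => B v u)) :
    IsBranchingBisim tr τ B := by
  intro s t hst
  exact ⟨fun a s' htr => h1 s t hst a s' htr, fun a t' htr => h2 t s hst a t' htr⟩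

theorem OW_congr {B B' : S → S → Prop} (h : ∀ x y, B x y ↔ B' x y) (hB : OW tr τ B) :
    OW tr τ B' := by
  intro s t hst a s' htr
  rcases hB s t ((h s t).2 hst) a s' htr with ⟨ha, hb⟩ | ⟨tk, t', hseq, htr', hb⟩
  · exact Or.inl ⟨ha, (h _ _).1 hb⟩
  · exact Or.inr ⟨tk, t', Aux18.TauSeq.mono hseq (fun x hx => (h _ _).1 hx), htr', (h _ _).1 hb⟩

theorem ow_bb : OW tr τ (BBisim tr τ) := by
  intro s t hst a s' htr
  obtain ⟨B, hB, hst'⟩ := hst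
  rcases (hB s t hst').1 a s' htr with ⟨ha, hb⟩ | ⟨tk, t', hseq, htr', hb⟩
  · exact Or.inl ⟨ha, ⟨B, hB, hb⟩⟩
  · exact Or.inr ⟨tk, t', Aux18.TauSeq.mono hseq (fun x hx => ⟨B, hB, hx⟩), htr', ⟨B, hB, hb⟩⟩

theorem ow_bb_flip : OW tr τ (fun u v => BBisim tr τ v u) := by
  refine OW_congr (fun x y => ?_) (ow_bb (tr := tr) (τ := τ))
  exact ⟨bb_symm, bb_symm⟩

theorem bb_isBB : IsBranchingBisim tr τ (BBisim tr τ) :=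
  isBB_of_OW ow_bb ow_bb_flip

end Aux18
namespace Aux18

/-- Push a τ-path (with intermediates related to `s`) across a bisimilarity `t ~ u`. -/
theorem push_tauseq {s t th : S} (hseq : TauSeq tr τ (BBisim tr τ) s t th)
    (hst : BBisim tr τ s t) :
    ∀ u, BBisim tr τ t u →
      ∃ v, TauSeq tr τ (fun x y => ∃ z, BBisim tr τ x z ∧ BBisim tr τ z y) s u v ∧
        BBisim tr τ th v := by
  induction hseq with
  | refl t => exact fun u htu => ⟨u, TauSeq.refl u, htu⟩
  | @step t t₁ th htr hst₁ rest ih =>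
    intro u htu
    rcases ow_bb t u htu τ t₁ htr with ⟨_, ht₁u⟩ | ⟨uk, u₁, hq, h2, h3⟩
    · exact ih hst₁ u ht₁u
    · obtain ⟨v, seqC, hend⟩ := ih hst₁ u₁ h3
      refine ⟨v, TauSeq.trans_seq
        (TauSeq.mono hq (fun x hx => ⟨t, hst, hx⟩))
        (TauSeq.step h2 ⟨t₁, hst₁, h3⟩ seqC), hend⟩

theorem ow_comp :
    OW tr τ (fun x y => ∃ z, BBisim tr τ x z ∧ BBisim tr τ z y) := by
  intro s u ⟨t, hst, htu⟩ a s' htr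
  rcases ow_bb s t hst a s' htr with ⟨ha, hs't⟩ | ⟨tk, t', hseq, hstep, hs't'⟩
  · exact Or.inl ⟨ha, ⟨t, hs't, htu⟩⟩
  · obtain ⟨v, hvseq, htkv⟩ := push_tauseq hseq hst u htu
    rcases ow_bb tk v htkv a t' hstep with ⟨ha, ht'v⟩ | ⟨vk, u', hseq2, hstep2, ht'u'⟩
    · subst ha
      rcases TauSeq.lastStep hvseq with rfl | ⟨vm, hvm, htrv, _⟩
      · exact Or.inl ⟨rfl, ⟨t', hs't', ht'v⟩⟩
      · exact Or.inr ⟨vm, v, hvm, htrv, ⟨t', hs't', ht'v⟩⟩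
    · have hstk : BBisim tr τ s tk := TauSeq.last hseq hst
      refine Or.inr ⟨vk, u', TauSeq.trans_seq hvseq
        (TauSeq.mono hseq2 (fun x hx => ⟨tk, hstk, hx⟩)), hstep2,
        ⟨t', hs't', ht'u'⟩⟩

theorem bb_trans {s t u : S} (h1 : BBisim tr τ s t) (h2 : BBisim tr τ t u) :
    BBisim tr τ s u := by
  refine ⟨fun x y => ∃ z, BBisim tr τ x z ∧ BBisim tr τ z y,
    isBB_of_OW ow_comp ?_, ⟨t, h1, h2⟩⟩
  refine OW_congr (fun x y => ?_) (ow_comp (tr := tr) (τ := τ))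
  constructor
  · rintro ⟨z, h1, h2⟩; exact ⟨z, bb_symm h2, bb_symm h1⟩
  · rintro ⟨z, h1, h2⟩; exact ⟨z, bb_symm h2, bb_symm h1⟩

end Aux18

namespace Aux18

theorem Steps.trans_steps {s t u : S} {w1 w2 : List Act}
    (h1 : Steps tr s w1 t) (h2 : Steps tr t w2 u) : Steps tr s (w1 ++ w2) u := by
  induction h1 with
  | refl => exact h2
  | step htr _ ih => exact Steps.step htr (ih h2)

theorem silent_steps {s t : S} {w : List Act} (hs : SilentState tr τ s)
    (h : Steps tr s w t) : SilentState tr τ t := by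
  intro w' t' h' a ha
  exact hs (w ++ w') t' (Steps.trans_steps h h') a (List.mem_append_right w ha)

theorem silent_tr {s s' : S} {a : Act} (hs : SilentState tr τ s) (h : tr s a s') :
    a = τ ∧ SilentState tr τ s' :=
  ⟨hs [a] s' (Steps.step h (Steps.refl s')) a (List.mem_singleton.mpr rfl),
    silent_steps hs (Steps.step h (Steps.refl s'))⟩

theorem tauseq_steps {B : S → S → Prop} {s x y : S} (h : TauSeq tr τ B s x y) :
    ∃ w : List Act, Steps tr x w y := by
  induction h with
  | refl t => exact ⟨[], Steps.refl t⟩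
  | step htr _ _ ih =>
    obtain ⟨w, hw⟩ := ih
    exact ⟨_ :: w, Steps.step htr hw⟩

theorem silent_bb_silent_aux {w : List Act} {t t' : S} (h : Steps tr t w t') :
    ∀ s, SilentState tr τ s → BBisim tr τ s t → ∀ a ∈ w, a = τ := by
  induction h with
  | refl => intro s _ _ a ha; exact absurd ha List.not_mem_nil
  | @step t a t₁ w' t'' htr hrest ih =>
    intro s hsil hst b hb
    obtain ⟨B, hB, hst'⟩ := hst
    rcases (hB s t hst').2 a t₁ htr with ⟨ha, hb'⟩ | ⟨sk, s₁, hq, h2, h3⟩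
    · rcases List.mem_cons.mp hb with rfl | hb
      · exact ha
      · exact ih s hsil ⟨B, hB, hb'⟩ b hb
    · obtain ⟨w0, hw0⟩ := tauseq_steps hq
      have hsk : SilentState tr τ sk := silent_steps hsil hw0
      obtain ⟨ha, hs₁⟩ := silent_tr hsk h2
      rcases List.mem_cons.mp hb with rfl | hb
      · exact ha
      · exact ih s₁ hs₁ ⟨B, hB, h3⟩ b hb

theorem silent_bb_silent {s t : S} (h : BBisim tr τ s t) (hs : SilentState tr τ s) :
    SilentState tr τ t :=
  fun w t' hw a ha => silent_bb_silent_aux hw s hs h a ha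

theorem silent_silent_bb {s t : S} (hs : SilentState tr τ s) (ht : SilentState tr τ t) :
    BBisim tr τ s t := by
  refine ⟨fun x y => SilentState tr τ x ∧ SilentState tr τ y, ?_, hs, ht⟩
  intro x y ⟨hx, hy⟩
  constructor
  · intro a x' htr
    obtain ⟨ha, hx'⟩ := silent_tr hx htr
    exact Or.inl ⟨ha, hx', hy⟩
  · intro a y' htr
    obtain ⟨ha, hy'⟩ := silent_tr hy htr
    exact Or.inl ⟨ha, hx, hy'⟩

theorem CCPath.trans_cc {s t u : S} {m n : ℕ}
    (h1 : CCPath tr τ s m t) (h2 : CCPath tr τ t n u) : CCPath tr τ s (m + n) u := by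
  induction h1 with
  | refl s => simpa using h2
  | stepEq htr hb _ ih => exact CCPath.stepEq htr hb (ih h2)
  | @stepNe s a s' m' t' htr hb _ ih =>
    have : m' + 1 + n = m' + n + 1 := by omega
    rw [this]
    exact CCPath.stepNe htr hb (ih h2)

theorem steps_ccpath {s t : S} {w : List Act} (h : Steps tr s w t) :
    ∃ m ≤ w.length, CCPath tr τ s m t := by
  induction h with
  | refl s => exact ⟨0, Nat.le_refl 0, CCPath.refl s⟩
  | @step s a s' w' t htr _ ih =>
    obtain ⟨m, hm, hp⟩ := ih
    by_cases hb : BBisim tr τ s s'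
    · exact ⟨m, le_trans hm (by simp), CCPath.stepEq htr hb hp⟩
    · exact ⟨m + 1, by simpa using hm, CCPath.stepNe htr hb hp⟩

theorem tauseq_ccpath0 {s x y : S} (h : TauSeq tr τ (BBisim tr τ) s x y)
    (hx : BBisim tr τ s x) : CCPath tr τ x 0 y := by
  induction h with
  | refl t => exact CCPath.refl t
  | step htr hb rest ih =>
    exact CCPath.stepEq htr (bb_trans (bb_symm hx) hb) (ih hb)

theorem ccNorm_le_of {s t : S} {m : ℕ} (h : CCPath tr τ s m t) (ht : SilentState tr τ t) :
    ccNorm tr τ s ≤ (m : ℕ∞) :=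
  sInf_le ⟨m, rfl, t, h, ht⟩

theorem enat_sInf_mem {T : Set ℕ∞} (h : T.Nonempty) (hT : ∀ x ∈ T, x ≠ ⊤) :
    sInf T ∈ T := by
  classical
  set N : Set ℕ := {n : ℕ | (n : ℕ∞) ∈ T} with hN
  have hNne : N.Nonempty := by
    obtain ⟨x, hx⟩ := h
    lift x to ℕ using hT x hx
    exact ⟨x, hx⟩
  have hmem : ((sInf N : ℕ) : ℕ∞) ∈ T := Nat.sInf_mem hNne
  have : sInf T = ((sInf N : ℕ) : ℕ∞) := by
    apply le_antisymm (sInf_le hmem)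
    apply le_sInf
    intro x hx
    lift x to ℕ using hT x hx
    exact_mod_cast Nat.sInf_le hx
  rw [this]; exact hmem

theorem ccNorm_attained {s : S}
    (h : ∃ (m : ℕ) (t : S), CCPath tr τ s m t ∧ SilentState tr τ t) :
    ∃ (m : ℕ) (t : S), ccNorm tr τ s = (m : ℕ∞) ∧ CCPath tr τ s m t ∧ SilentState tr τ t := by
  have hne : {n : ℕ∞ | ∃ ℓ : ℕ, n = (ℓ : ℕ∞) ∧ ∃ t, CCPath tr τ s ℓ t ∧ SilentState tr τ t}.Nonempty := by
    obtain ⟨m, t, hp, ht⟩ := h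
    exact ⟨(m : ℕ∞), m, rfl, t, hp, ht⟩
  have := enat_sInf_mem hne (by rintro x ⟨ℓ, rfl, _⟩; exact WithTop.coe_ne_top)
  obtain ⟨ℓ, hℓ, t, hp, ht⟩ := this
  exact ⟨ℓ, t, hℓ, hp, ht⟩

/-- Transfer a cc-path across a bisimilarity. -/
theorem ccpath_transfer {s u : S} {m : ℕ} (h : CCPath tr τ s m u)
    (hu : SilentState tr τ u) :
    ∀ t, BBisim tr τ s t →
      ∃ m' ≤ m, ∃ u', CCPath tr τ t m' u' ∧ SilentState tr τ u' := by
  induction h with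
  | refl s =>
    intro t hst
    exact ⟨0, Nat.le_refl 0, t, CCPath.refl t, silent_bb_silent hst hu⟩
  | @stepEq s a s' m' t0 htr hb _ ih =>
    intro t hst
    exact ih hu t (bb_trans (bb_symm hb) hst)
  | @stepNe s a s' m' t0 htr hb _ ih =>
    intro t hst
    rcases ow_bb s t hst a s' htr with ⟨_, hs't⟩ | ⟨tk, t', hseq, hstep, hs't'⟩
    · obtain ⟨m'', hle, u', hp, hsil⟩ := ih hu t hs't
      exact ⟨m'', by omega, u', hp, hsil⟩
    · obtain ⟨m'', hle, u', hp, hsil⟩ := ih hu t' hs't'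
      have hpre : CCPath tr τ t 0 tk := tauseq_ccpath0 hseq hst
      by_cases hc : BBisim tr τ tk t'
      · exact ⟨0 + m'', by omega, u', CCPath.trans_cc hpre (CCPath.stepEq hstep hc hp), hsil⟩
      · exact ⟨0 + (m'' + 1), by omega, u',
          CCPath.trans_cc hpre (CCPath.stepNe hstep hc hp), hsil⟩

theorem ccNorm_le_of_bb {s t : S} (h : BBisim tr τ s t) :
    ccNorm tr τ t ≤ ccNorm tr τ s := by
  by_cases hne : ∃ (m : ℕ) (u : S), CCPath tr τ s m u ∧ SilentState tr τ u
  · obtain ⟨m, u, heq, hp, hu⟩ := ccNorm_attained hne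
    obtain ⟨m', hle, u', hp', hu'⟩ := ccpath_transfer hp hu t h
    calc ccNorm tr τ t ≤ (m' : ℕ∞) := ccNorm_le_of hp' hu'
    _ ≤ (m : ℕ∞) := by exact_mod_cast hle
    _ = ccNorm tr τ s := heq.symm
  · have : {n : ℕ∞ | ∃ ℓ : ℕ, n = (ℓ : ℕ∞) ∧ ∃ u, CCPath tr τ s ℓ u ∧ SilentState tr τ u} = ∅ := by
      ext x
      simp only [Set.mem_setOf_eq, Set.mem_empty_iff_false, iff_false]
      rintro ⟨ℓ, rfl, u, hp, hu⟩
      exact hne ⟨ℓ, u, hp, hu⟩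
    have h2 : ccNorm tr τ s = ⊤ := by rw [ccNorm, this, sInf_empty]
    rw [h2]; exact le_top

end Aux18

namespace Aux18
variable {V : Type} {G : BPA V Act}

theorem tr_append {s t δ : List V} {a : Act} (h : G.tr s a t) : G.tr (s ++ δ) a (t ++ δ) := by
  obtain ⟨A, γ, β, hr, rfl, rfl⟩ := h
  exact ⟨A, γ, β ++ δ, hr, rfl, by simp⟩

theorem steps_append {s t δ : List V} {w : List Act} (h : Steps G.tr s w t) :
    Steps G.tr (s ++ δ) w (t ++ δ) := by
  induction h with
  | refl s => exact Steps.refl _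
  | step htr _ ih => exact Steps.step (tr_append htr) ih

theorem norm_to_nil {A : V} (h : G.norm [A] ≠ ⊤) : ∃ w, Steps G.tr [A] w [] := by
  by_contra hc
  push_neg at hc
  apply h
  have : {n : ℕ∞ | ∃ w : List Act, n = (w.length : ℕ∞) ∧ Steps G.tr [A] w []} = ∅ := by
    ext x
    simp only [Set.mem_setOf_eq, Set.mem_empty_iff_false, iff_false]
    rintro ⟨w, rfl, hw⟩
    exact hc w hw
  rw [BPA.norm, this, sInf_empty]

theorem normed_to_nil (hG : G.Normed) (α : List V) : ∃ w, Steps G.tr α w [] := by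
  induction α with
  | nil => exact ⟨[], Steps.refl []⟩
  | cons A α ih =>
    obtain ⟨w1, hw1⟩ := norm_to_nil (hG A)
    obtain ⟨w2, hw2⟩ := ih
    have : Steps G.tr ([A] ++ α) w1 ([] ++ α) := steps_append hw1
    exact ⟨w1 ++ w2, Steps.trans_steps (by simpa using this) hw2⟩

theorem silent_nil : SilentState G.tr τ ([] : List V) := by
  intro w s' h a ha
  cases h with
  | refl => exact absurd ha List.not_mem_nil
  | step htr _ => obtain ⟨A, γ, β, _, hAB, _⟩ := htr; exact absurd hAB (by simp)

theorem tr_cons_append {ρ δ s' : List V} {a : Act} (hρ : ρ ≠ [])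
    (h : G.tr (ρ ++ δ) a s') : ∃ ρ₁, s' = ρ₁ ++ δ := by
  obtain ⟨A, γ, β, _, hs, rfl⟩ := h
  cases ρ with
  | nil => exact absurd rfl hρ
  | cons R ρ' =>
    have : R = A ∧ ρ' ++ δ = β := by
      have := hs
      simp only [List.cons_append] at this
      exact ⟨(List.cons.injEq _ _ _ _ ▸ this).1, (List.cons.injEq _ _ _ _ ▸ this).2⟩
    obtain ⟨rfl, rfl⟩ := this
    exact ⟨γ ++ ρ', by simp⟩

/-- Core lower-bound lemma: a path from `ρδ` (not bisimilar to `δ`) to a silent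
state contains strictly more class changes than `ccNorm δ`. -/
theorem cc_lower (hG : G.Normed) {δ : List V} :
    ∀ {s : List V} {ℓ : ℕ} {t : List V}, CCPath G.tr τ s ℓ t → SilentState G.tr τ t →
      ∀ ρ, s = ρ ++ δ → ¬ BBisim G.tr τ s δ → ccNorm G.tr τ δ + 1 ≤ (ℓ : ℕ∞) := by
  intro s ℓ t hpath
  induction hpath with
  | refl s =>
    intro hsil ρ hs hnb
    exfalso
    apply hnb
    obtain ⟨w, hw⟩ := normed_to_nil hG ρ
    have hsδ : Steps G.tr (ρ ++ δ) w ([] ++ δ) := steps_append hw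
    rw [← hs] at hsδ
    have hδ : SilentState G.tr τ δ := by simpa using silent_steps hsil hsδ
    rw [hs]
    exact silent_silent_bb (hs ▸ hsil) hδ
  | @stepEq s a s' m t0 htr hb _ ih =>
    intro hsil ρ hs hnb
    rcases eq_or_ne ρ [] with rfl | hρ
    · exact absurd (show BBisim G.tr τ s δ by rw [hs]; exact bb_refl δ) hnb
    · obtain ⟨ρ₁, hs'⟩ := tr_cons_append hρ (hs ▸ htr)
      exact ih hsil ρ₁ hs' (fun hc => hnb (bb_trans hb hc))
  | @stepNe s a s' m t0 htr hb _ ih =>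
    intro hsil ρ hs hnb
    rcases eq_or_ne ρ [] with rfl | hρ
    · exact absurd (show BBisim G.tr τ s δ by rw [hs]; exact bb_refl δ) hnb
    · obtain ⟨ρ₁, hs'⟩ := tr_cons_append hρ (hs ▸ htr)
      by_cases hbδ : BBisim G.tr τ s' δ
      · obtain ⟨m', hle, u', hp', hu'⟩ := ccpath_transfer (by assumption) hsil δ hbδ
        have h1 : ccNorm G.tr τ δ ≤ (m : ℕ∞) := by
          calc ccNorm G.tr τ δ ≤ (m' : ℕ∞) := ccNorm_le_of hp' hu'
          _ ≤ (m : ℕ∞) := by exact_mod_cast hle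
        calc ccNorm G.tr τ δ + 1 ≤ (m : ℕ∞) + 1 := by exact add_le_add_left h1 1
        _ = ((m + 1 : ℕ) : ℕ∞) := by push_cast; ring
      · have := ih hsil ρ₁ hs' hbδ
        calc ccNorm G.tr τ δ + 1 ≤ (m : ℕ∞) := this
        _ ≤ ((m + 1 : ℕ) : ℕ∞) := by exact_mod_cast Nat.le_succ m
end Aux18

namespace Aux18
variable {V : Type} {G : BPA V Act}

theorem ccNorm_exists (hG : G.Normed) (s : List V) :
    ∃ (m : ℕ) (t : List V), CCPath G.tr τ s m t ∧ SilentState G.tr τ t := by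
  obtain ⟨w, hw⟩ := normed_to_nil hG s
  obtain ⟨m, _, hp⟩ := steps_ccpath (τ := τ) hw
  exact ⟨m, [], hp, silent_nil⟩

theorem redfree_head {X : V} {β γ : List V} (h : RedFreePrefix G τ (X :: β) γ) :
    ¬ BBisim G.tr τ (X :: (β ++ γ)) (β ++ γ) :=
  fun hb => h ⟨[], X, β, rfl, hb⟩

theorem redfree_tail {X : V} {β γ : List V} (h : RedFreePrefix G τ (X :: β) γ) :
    RedFreePrefix G τ β γ := by
  rintro ⟨δ, Y, β', hβ, hb⟩
  exact h ⟨X :: δ, Y, β', by rw [hβ]; rfl, hb⟩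

theorem redfree_lower (hG : G.Normed) {γ : List V} :
    ∀ α : List V, RedFreePrefix G τ α γ →
      (α.length : ℕ∞) + ccNorm G.tr τ γ ≤ ccNorm G.tr τ (α ++ γ) := by
  intro α
  induction α with
  | nil => intro _; simp
  | cons X β ih =>
    intro hrf
    have h1 := redfree_head hrf
    have h2 := ih (redfree_tail hrf)
    obtain ⟨m, t, heq, hp, ht⟩ := ccNorm_attained (ccNorm_exists hG ((X :: β) ++ γ))
    have h3 : ccNorm G.tr τ (β ++ γ) + 1 ≤ (m : ℕ∞) := by
      refine cc_lower hG hp ht [X] rfl ?_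
      simpa using h1
    have h4 : (β.length : ℕ∞) + ccNorm G.tr τ γ + 1 ≤ (m : ℕ∞) :=
      le_trans (add_le_add_left h2 1) h3
    rw [heq]
    calc ((X :: β).length : ℕ∞) + ccNorm G.tr τ γ
        = (β.length : ℕ∞) + ccNorm G.tr τ γ + 1 := by
          push_cast [List.length_cons]; ring
      _ ≤ (m : ℕ∞) := h4

theorem norm_attained (hG : G.Normed) (A : V) :
    ∃ w : List Act, G.norm [A] = (w.length : ℕ∞) ∧ Steps G.tr [A] w [] := by
  have hne : {n : ℕ∞ | ∃ w : List Act, n = (w.length : ℕ∞) ∧ Steps G.tr [A] w []}.Nonempty := by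
    obtain ⟨w, hw⟩ := norm_to_nil (hG A)
    exact ⟨(w.length : ℕ∞), w, rfl, hw⟩
  have := enat_sInf_mem hne (by rintro x ⟨w, rfl, _⟩; exact WithTop.coe_ne_top)
  obtain ⟨w, hw, hsteps⟩ := this
  exact ⟨w, hw, hsteps⟩

theorem cc_upper (hG : G.Normed) (A : V) (γ : List V) :
    ccNorm G.tr τ (A :: γ) ≤ G.norm [A] + ccNorm G.tr τ γ := by
  obtain ⟨w, hnorm, hw⟩ := norm_attained hG A
  obtain ⟨mγ, uγ, hcγ, hpγ, huγ⟩ := ccNorm_attained (ccNorm_exists hG γ)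
  have hsteps : Steps G.tr (A :: γ) w γ := by
    simpa using steps_append (δ := γ) hw
  obtain ⟨m, hm, hp⟩ := steps_ccpath (τ := τ) hsteps
  have hfull : CCPath G.tr τ (A :: γ) (m + mγ) uγ := CCPath.trans_cc hp hpγ
  calc ccNorm G.tr τ (A :: γ) ≤ ((m + mγ : ℕ) : ℕ∞) := ccNorm_le_of hfull huγ
    _ ≤ ((w.length + mγ : ℕ) : ℕ∞) := by exact_mod_cast Nat.add_le_add_right hm mγ
    _ = G.norm [A] + ccNorm G.tr τ γ := by rw [hnorm, hcγ]; push_cast; ring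

theorem finiteV (hG : G.Normed) : Finite V := by
  classical
  have f : ∀ A : V, ∃ r ∈ G.rules, r.1 = A := by
    intro A
    obtain ⟨w, hw⟩ := norm_to_nil (hG A)
    cases hw with
    | step htr _ =>
      obtain ⟨A', γ0, β, hr, hA, _⟩ := htr
      have : A' = A ∧ β = [] := by
        constructor
        · exact (List.cons.injEq A' β A []).mp hA.symm |>.1
        · exact ((List.cons.injEq A' β A []).mp hA.symm).2
      exact ⟨(A', _, γ0), hr, this.1⟩
  choose r hr hr1 using f
  refine Finite.of_injective (fun A => (⟨r A, hr A⟩ : {x // x ∈ G.rules})) ?_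
  intro a b hab
  have : r a = r b := congrArg Subtype.val hab
  rw [← hr1 a, ← hr1 b, this]

end Aux18

end Aux

/-- the set of strings `α` with `αγ ~ Aγ` that are redundancy-free
prefixes of `αγ` is nonempty and finite, and each such `α` has `|α| ≤ ‖A‖`. -/
theorem candidate_decompositions_nonempty_finite {V Act : Type} (G : BPA V Act)
    (τ : Act) (hG : G.Normed) (A : V) (γ : List V) :
    {α : List V | BBisim G.tr τ (α ++ γ) (A :: γ) ∧ RedFreePrefix G τ α γ}.Nonempty ∧
    {α : List V | BBisim G.tr τ (α ++ γ) (A :: γ) ∧ RedFreePrefix G τ α γ}.Finite ∧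
    (∀ α : List V, BBisim G.tr τ (α ++ γ) (A :: γ) → RedFreePrefix G τ α γ →
      (α.length : ℕ∞) ≤ G.norm [A]) := by
  classical
  have hbound : ∀ α : List V, BBisim G.tr τ (α ++ γ) (A :: γ) → RedFreePrefix G τ α γ →
      (α.length : ℕ∞) ≤ G.norm [A] := by
    intro α hα hrf
    obtain ⟨cγ, uγ, hcγ, -, -⟩ := Aux18.ccNorm_attained (Aux18.ccNorm_exists hG γ)
    have h1 := Aux18.redfree_lower hG α hrf
    have h2 : ccNorm G.tr τ (α ++ γ) ≤ ccNorm G.tr τ (A :: γ) :=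
      Aux18.ccNorm_le_of_bb (Aux18.bb_symm hα)
    have h3 := Aux18.cc_upper (τ := τ) hG A γ
    have h4 : (α.length : ℕ∞) + ccNorm G.tr τ γ ≤ G.norm [A] + ccNorm G.tr τ γ :=
      le_trans h1 (le_trans h2 h3)
    rw [hcγ] at h4
    exact (WithTop.add_le_add_iff_right (WithTop.coe_ne_top)).mp h4
  have hne : {α : List V | BBisim G.tr τ (α ++ γ) (A :: γ) ∧ RedFreePrefix G τ α γ}.Nonempty := by
    by_cases hred : BBisim G.tr τ (A :: γ) γ
    · refine ⟨[], ?_, ?_⟩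
      · simpa using Aux18.bb_symm hred
      · rintro ⟨δ, X, β, h, -⟩
        exact absurd h (by simp)
    · refine ⟨[A], ?_, ?_⟩
      · exact Aux18.bb_refl _
      · rintro ⟨δ, X, β, h, hb⟩
        cases δ with
        | nil =>
          obtain ⟨rfl, rfl⟩ : A = X ∧ [] = β := by simpa using h
          exact hred (by simpa using hb)
        | cons d δ' =>
          simp only [List.cons_append, List.cons.injEq] at h
          exact absurd h.2 (by simp)
  refine ⟨hne, ?_, hbound⟩
  haveI : Finite V := Aux18.finiteV hG
  obtain ⟨w, hnorm, -⟩ := Aux18.norm_attained hG A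
  refine (List.finite_length_le V w.length).subset ?_
  rintro α ⟨hα, hrf⟩
  have := hbound α hα hrf
  rw [hnorm] at this
  exact_mod_cast this
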